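/- Let G be a (K_3, K_{1,3}+2P_1)-free graph, let x be a vertex with three neighbours x_1, x_2, x_3, and let N_2 = V(G) \ N[x]. Then the set of vertices of N_2 having no neighbour in {x_1, x_2, x_3} has at most 2 elements. -/

import Mathlib

/-- K_{1,3} + 2P₁: a claw (0 adjacent to 1, 2, 3) plus two isolated vertices. -/
def K13plus2P1 : SimpleGraph (Fin 6) :=
  SimpleGraph.fromRel (fun a b => (a.val, b.val) ∈ [(0,1),(0,2),(0,3)])

theorem statement_10 {V : Type*} (G : SimpleGraph V) (htri : G.CliqueFree 3)
    (hfree : IsEmpty (K13plus2P1 ↪g G)) (x x1 x2 x3 : V)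
    (h1 : G.Adj x x1) (h2 : G.Adj x x2) (h3 : G.Adj x x3)
    (h12 : x1 ≠ x2) (h13 : x1 ≠ x3) (h23 : x2 ≠ x3) :
    ({y | y ≠ x ∧ ¬ G.Adj x y ∧ ¬ G.Adj y x1 ∧ ¬ G.Adj y x2 ∧
      ¬ G.Adj y x3}).encard ≤ 2 := by
  classical
  set S : Set V := {y | y ≠ x ∧ ¬ G.Adj x y ∧ ¬ G.Adj y x1 ∧ ¬ G.Adj y x2 ∧
      ¬ G.Adj y x3} with hS
  -- no triangle among x's neighbours
  have hnadj : ∀ a b : V, G.Adj x a → G.Adj x b → ¬ G.Adj a b := by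
    intro a b ha hb hab
    exact (htri {x, a, b}) (SimpleGraph.is3Clique_triple_iff.2 ⟨ha, hb, hab⟩)
  -- key: no two nonadjacent vertices in S
  have key : ∀ u v, u ∈ S → v ∈ S → u ≠ v → ¬ G.Adj u v → False := by
    intro u v hu hv huv hadj
    obtain ⟨hux, hxu, hu1, hu2, hu3⟩ := hu
    obtain ⟨hvx, hxv, hv1, hv2, hv3⟩ := hv
    let f : Fin 6 → V := ![x, x1, x2, x3, u, v]
    have hf0 : f 0 = x := rfl
    have hf1 : f 1 = x1 := rfl
    have hf2 : f 2 = x2 := rfl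
    have hf3 : f 3 = x3 := rfl
    have hf4 : f 4 = u := rfl
    have hf5 : f 5 = v := rfl
    have n1 : x ≠ x1 := h1.ne
    have n2 : x ≠ x2 := h2.ne
    have n3 : x ≠ x3 := h3.ne
    have u1 : u ≠ x1 := fun h => hxu (h ▸ h1)
    have u2 : u ≠ x2 := fun h => hxu (h ▸ h2)
    have u3 : u ≠ x3 := fun h => hxu (h ▸ h3)
    have v1 : v ≠ x1 := fun h => hxv (h ▸ h1)
    have v2 : v ≠ x2 := fun h => hxv (h ▸ h2)
    have v3 : v ≠ x3 := fun h => hxv (h ▸ h3)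
    have n12 := hnadj x1 x2 h1 h2
    have n13 := hnadj x1 x3 h1 h3
    have n23 := hnadj x2 x3 h2 h3
    have hinj : Function.Injective f := by
      intro a b hab
      fin_cases a <;> fin_cases b <;>
        simp only [hf0, hf1, hf2, hf3, hf4, hf5] at hab <;>
        first
        | rfl
        | (exfalso; first
            | exact n1 hab | exact n2 hab | exact n3 hab
            | exact n1 hab.symm | exact n2 hab.symm | exact n3 hab.symm
            | exact h12 hab | exact h13 hab | exact h23 hab
            | exact h12 hab.symm | exact h13 hab.symm | exact h23 hab.symm
            | exact u1 hab | exact u2 hab | exact u3 hab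
            | exact u1 hab.symm | exact u2 hab.symm | exact u3 hab.symm
            | exact v1 hab | exact v2 hab | exact v3 hab
            | exact v1 hab.symm | exact v2 hab.symm | exact v3 hab.symm
            | exact hux hab | exact hux hab.symm
            | exact hvx hab | exact hvx hab.symm
            | exact huv hab | exact huv hab.symm)
    have hmap : ∀ a b : Fin 6, G.Adj (f a) (f b) ↔ K13plus2P1.Adj a b := by
      intro a b
      fin_cases a <;> fin_cases b <;>
        simp only [hf0, hf1, hf2, hf3, hf4, hf5] <;>
        first
        | (refine iff_of_true ?_ (by simp only [K13plus2P1,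
              SimpleGraph.fromRel_adj]; decide) <;>
            first
            | exact h1 | exact h2 | exact h3
            | exact h1.symm | exact h2.symm | exact h3.symm)
        | (refine iff_of_false ?_ (by simp only [K13plus2P1,
              SimpleGraph.fromRel_adj]; decide) <;>
            first
            | exact G.irrefl
            | exact hxu | exact hxv
            | exact fun h => hxu h.symm | exact fun h => hxv h.symm
            | exact hu1 | exact hu2 | exact hu3
            | exact hv1 | exact hv2 | exact hv3
            | exact fun h => hu1 h.symm | exact fun h => hu2 h.symm
            | exact fun h => hu3 h.symm
            | exact fun h => hv1 h.symm | exact fun h => hv2 h.symm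
            | exact fun h => hv3 h.symm
            | exact n12 | exact n13 | exact n23
            | exact fun h => n12 h.symm | exact fun h => n13 h.symm
            | exact fun h => n23 h.symm
            | exact hadj | exact fun h => hadj h.symm)
    exact hfree.false ⟨⟨f, hinj⟩, fun {a b} => hmap a b⟩
  by_contra hle
  push_neg at hle
  obtain ⟨a, b, ha, hb, hab⟩ := Set.one_lt_encard_iff.1 (lt_trans (by norm_num : (1:ℕ∞) < 2) hle)
  have hnsub : ¬ S ⊆ {a, b} := by
    intro hsub
    have h2' : ({a, b} : Set V).encard ≤ 2 := by
      have := Set.encard_insert_le ({b} : Set V) a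
      simpa [one_add_one_eq_two] using this
    exact absurd ((Set.encard_mono hsub).trans h2') (not_le.2 hle)
  obtain ⟨c, hc, hcab⟩ := Set.not_subset.1 hnsub
  simp only [Set.mem_insert_iff, Set.mem_singleton_iff, not_or] at hcab
  obtain ⟨hca, hcb⟩ := hcab
  by_cases hab' : G.Adj a b
  · by_cases hac' : G.Adj a c
    · by_cases hbc' : G.Adj b c
      · exact (htri {a, b, c}) (SimpleGraph.is3Clique_triple_iff.2
          ⟨hab', hac', hbc'⟩)
      · exact key b c hb hc (Ne.symm hcb) hbc'
    · exact key a c ha hc (Ne.symm hca) hac'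
  · exact key a b ha hb hab hab'
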